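/- Let c > 0. The function L_c(x,y) = −(c/2)·x·∑_{m=0}^∞ (−1)^m (c(x² − y²)/4)^m / (m!·(m+1)!) satisfies, for all (x,y) ∈ ℝ²: ∂²L_c/∂x²(x,y) − ∂²L_c/∂y²(x,y) + c·L_c(x,y) = 0; and for all x ∈ ℝ: ∂L_c/∂y(x,0) = 0 and L_c(x,x) = −(c/2)·x. (In particular, L_c solves the inverse backstepping kernel equation ℓ_xx − ℓ_yy + c·ℓ = 0 on 0 < y < x < 1 with ℓ_y(x,0) = 0 and ℓ(x,x) = −cx/2.) -/

import Mathlib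

/-- The inverse backstepping kernel
`L_c(x,y) = −(c/2)·x·∑_{m=0}^∞ (−1)^m (c(x²−y²)/4)^m / (m!·(m+1)!)`. -/
noncomputable def Lker (c x y : ℝ) : ℝ :=
  -(c / 2) * x * ∑' m : ℕ, (-1 : ℝ) ^ m * (c * (x ^ 2 - y ^ 2) / 4) ^ m /
    ((Nat.factorial m : ℝ) * (Nat.factorial (m + 1) : ℝ))

/-- Partial derivative in the first variable. -/
noncomputable def pdx (f : ℝ → ℝ → ℝ) (x y : ℝ) : ℝ := deriv (fun x' => f x' y) x

/-- Partial derivative in the second variable. -/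
noncomputable def pdy (f : ℝ → ℝ → ℝ) (x y : ℝ) : ℝ := deriv (fun y' => f x y') y


open scoped Nat

/-- Coefficients of the Bessel-type series. -/
noncomputable def aaK : ℕ → ℝ := fun m => (-1) ^ m / ((m ! : ℝ) * ((m + 1)! : ℝ))

/-- Power series sum. -/
noncomputable def psum (b : ℕ → ℝ) (t : ℝ) : ℝ := ∑' m : ℕ, b m * t ^ m

/-- Formal derivative of coefficients. -/
noncomputable def dbK (b : ℕ → ℝ) : ℕ → ℝ := fun m => ((m : ℝ) + 1) * b (m + 1)

lemma aaK_bound : ∀ m : ℕ, |aaK m| ≤ 1 * (1 : ℝ) ^ m / m ! := by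
  intro m
  have h1 : (0:ℝ) < (m ! : ℝ) := by positivity
  have h2 : (1:ℝ) ≤ ((m + 1)! : ℝ) := by exact_mod_cast Nat.one_le_iff_ne_zero.2 (Nat.factorial_ne_zero _)
  have : |aaK m| = 1 / ((m ! : ℝ) * ((m + 1)! : ℝ)) := by
    rw [aaK, abs_div, abs_pow, abs_neg, abs_one, one_pow]
    congr 1
    rw [abs_of_pos]; positivity
  rw [this, one_mul, one_pow]
  rw [div_le_div_iff₀ (by positivity) h1]
  nlinarith

lemma dbK_bound {K r : ℝ} {b : ℕ → ℝ} (hb : ∀ m, |b m| ≤ K * r ^ m / m !) :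
    ∀ m, |dbK b m| ≤ (K * r) * r ^ m / m ! := by
  intro m
  have h := hb (m + 1)
  have hm : (0:ℝ) < (m : ℝ) + 1 := by positivity
  have hfac : ((m + 1)! : ℝ) = ((m : ℝ) + 1) * (m ! : ℝ) := by
    push_cast [Nat.factorial_succ]; ring
  have : |dbK b m| = ((m : ℝ) + 1) * |b (m + 1)| := by
    rw [dbK, abs_mul, abs_of_pos hm]
  rw [this]
  calc ((m : ℝ) + 1) * |b (m + 1)| ≤ ((m : ℝ) + 1) * (K * r ^ (m + 1) / (m + 1)!) := by
        exact mul_le_mul_of_nonneg_left h (le_of_lt hm)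
    _ = (K * r) * r ^ m / m ! := by
        rw [hfac, pow_succ]
        field_simp

lemma psum_summable {K r : ℝ} {b : ℕ → ℝ} (hb : ∀ m, |b m| ≤ K * r ^ m / m !) (t : ℝ) :
    Summable fun m : ℕ => b m * t ^ m := by
  apply Summable.of_abs
  have hs : Summable (fun m : ℕ => K * (|r| * |t|) ^ m / m !) := by
    have := (Real.summable_pow_div_factorial (|r| * |t|)).mul_left K
    exact this.congr fun m => by ring
  refine Summable.of_nonneg_of_le (fun m => abs_nonneg _) (fun m => ?_) hs
  · calc |b m * t ^ m| = |b m| * |t| ^ m := by rw [abs_mul, abs_pow]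
      _ ≤ (K * r ^ m / m !) * |t| ^ m :=
          mul_le_mul_of_nonneg_right (hb m) (by positivity)
      _ ≤ (K * |r| ^ m / m !) * |t| ^ m := by
          have : r ^ m ≤ |r| ^ m := by
            calc r ^ m ≤ |r ^ m| := le_abs_self _
              _ = |r| ^ m := abs_pow r m
          have hK : 0 ≤ K := by
            have h0 := (abs_nonneg (b 0)).trans (hb 0)
            simpa using h0
          gcongr
      _ = K * (|r| * |t|) ^ m / m ! := by rw [mul_pow]; ring

lemma K_nonneg {K r : ℝ} {b : ℕ → ℝ} (hb : ∀ m, |b m| ≤ K * r ^ m / m !) : 0 ≤ K := by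
  have h0 := (abs_nonneg (b 0)).trans (hb 0)
  simpa using h0

lemma psum_hasDerivAt {K r : ℝ} {b : ℕ → ℝ} (hb : ∀ m, |b m| ≤ K * r ^ m / m !) (t : ℝ) :
    HasDerivAt (psum b) (psum (dbK b) t) t := by
  have hK : 0 ≤ K := K_nonneg hb
  set R : ℝ := |t| + 1 with hR
  have hR1 : (1 : ℝ) ≤ R := by simp [hR]
  have hR0 : (0 : ℝ) < R := lt_of_lt_of_le one_pos hR1
  -- the summable bound for the derivatives on the ball
  have hu : Summable (fun m : ℕ => K * (2 * R * |r|) ^ m / m !) := by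
    have := (Real.summable_pow_div_factorial (2 * R * |r|)).mul_left K
    exact this.congr fun m => by ring
  have hbound : ∀ (m : ℕ) (x : ℝ), x ∈ Metric.ball (0:ℝ) R →
      ‖b m * ((m : ℝ) * x ^ (m - 1))‖ ≤ K * (2 * R * |r|) ^ m / m ! := by
    intro m x hx
    have hxR : |x| ≤ R := by
      have := Metric.mem_ball.1 hx
      rw [Real.dist_eq, sub_zero] at this
      linarith
    have h1 : ‖b m * ((m : ℝ) * x ^ (m - 1))‖ = |b m| * ((m : ℝ) * |x| ^ (m - 1)) := by
      rw [Real.norm_eq_abs, abs_mul, abs_mul, abs_pow]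
      congr 2
      exact Nat.abs_cast m
    rw [h1]
    have h2 : |x| ^ (m - 1) ≤ R ^ m := by
      calc |x| ^ (m - 1) ≤ R ^ (m - 1) := pow_le_pow_left₀ (abs_nonneg x) hxR _
        _ ≤ R ^ m := pow_le_pow_right₀ hR1 (Nat.sub_le m 1)
    have h3 : (m : ℝ) ≤ 2 ^ m := by exact_mod_cast (Nat.lt_two_pow_self (n := m)).le
    have h4 : |b m| ≤ K * |r| ^ m / m ! := by
      refine (hb m).trans ?_
      have : r ^ m ≤ |r| ^ m := (le_abs_self _).trans_eq (abs_pow r m)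
      gcongr
    calc |b m| * ((m : ℝ) * |x| ^ (m - 1))
        ≤ (K * |r| ^ m / m !) * (2 ^ m * R ^ m) := by
          have hc : (m : ℝ) * |x| ^ (m - 1) ≤ 2 ^ m * R ^ m := by
            have := mul_le_mul h3 h2 (by positivity) (by positivity)
            exact this
          have hbm : (0:ℝ) ≤ |b m| := abs_nonneg _
          have := mul_le_mul (h4) hc (by positivity) (by positivity)
          exact this
      _ = K * (2 * R * |r|) ^ m / m ! := by rw [mul_pow, mul_pow]; ring
  have hderiv : ∀ (m : ℕ) (x : ℝ), x ∈ Metric.ball (0:ℝ) R →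
      HasDerivAt (fun s => b m * s ^ m) (b m * ((m : ℝ) * x ^ (m - 1))) x := by
    intro m x _
    exact (hasDerivAt_pow m x).const_mul (b m)
  have htball : t ∈ Metric.ball (0:ℝ) R := by
    rw [Metric.mem_ball, Real.dist_eq, sub_zero]; simp [hR]
  have key : HasDerivAt (fun s => ∑' m : ℕ, b m * s ^ m)
      (∑' m : ℕ, b m * ((m : ℝ) * t ^ (m - 1))) t := by
    exact hasDerivAt_tsum_of_isPreconnected hu Metric.isOpen_ball
      (convex_ball (0:ℝ) R).isPreconnected hderiv hbound htball
      (psum_summable hb t) htball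
  have hsum' : Summable fun m : ℕ => b m * ((m : ℝ) * t ^ (m - 1)) := by
    apply Summable.of_norm
    exact Summable.of_nonneg_of_le (fun m => norm_nonneg _)
      (fun m => hbound m t htball) hu
  have heq : (∑' m : ℕ, b m * ((m : ℝ) * t ^ (m - 1))) = psum (dbK b) t := by
    rw [hsum'.tsum_eq_zero_add]
    simp only [Nat.cast_zero, zero_mul, mul_zero, zero_add]
    rw [psum]
    apply tsum_congr
    intro m
    rw [dbK]
    push_cast
    ring
  have goal' : HasDerivAt (psum b) (∑' m : ℕ, b m * ((m : ℝ) * t ^ (m - 1))) t := key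
  rw [heq] at goal'
  exact goal'

lemma mulm_bound {K r : ℝ} {b : ℕ → ℝ} (hb : ∀ m, |b m| ≤ K * r ^ m / m !) :
    ∀ m : ℕ, |(m : ℝ) * b m| ≤ K * (2 * |r|) ^ m / m ! := by
  intro m
  have h3 : (m : ℝ) ≤ 2 ^ m := by exact_mod_cast (Nat.lt_two_pow_self (n := m)).le
  have h4 : |b m| ≤ K * |r| ^ m / m ! := by
    refine (hb m).trans ?_
    have : r ^ m ≤ |r| ^ m := (le_abs_self _).trans_eq (abs_pow r m)
    have hK : 0 ≤ K := K_nonneg hb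
    gcongr
  have : |(m : ℝ) * b m| = (m : ℝ) * |b m| := by
    rw [abs_mul]; congr 1; exact Nat.abs_cast m
  rw [this]
  calc (m : ℝ) * |b m| ≤ 2 ^ m * (K * |r| ^ m / m !) :=
        mul_le_mul h3 h4 (abs_nonneg _) (by positivity)
    _ = K * (2 * |r|) ^ m / m ! := by rw [mul_pow]; ring

lemma db_aaK_bound : ∀ m : ℕ, |dbK aaK m| ≤ (1 * 1) * (1 : ℝ) ^ m / m ! :=
  dbK_bound aaK_bound

lemma ddb_aaK_bound : ∀ m : ℕ, |dbK (dbK aaK) m| ≤ ((1 * 1) * 1) * (1 : ℝ) ^ m / m ! :=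
  dbK_bound db_aaK_bound

lemma coef_identity : ∀ m : ℕ, (m : ℝ) * dbK aaK m + 2 * dbK aaK m + aaK m = 0 := by
  intro m
  simp only [dbK, aaK]
  have f1 : ((m + 1)! : ℝ) = ((m : ℝ) + 1) * (m ! : ℝ) := by
    push_cast [Nat.factorial_succ]; ring
  have f2 : ((m + 1 + 1)! : ℝ) = ((m : ℝ) + 2) * (((m : ℝ) + 1) * (m ! : ℝ)) := by
    rw [Nat.factorial_succ (m + 1)]
    push_cast [Nat.factorial_succ]; ring
  have hm0 : (m ! : ℝ) ≠ 0 := by positivity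
  have hm1 : (m : ℝ) + 1 ≠ 0 := by positivity
  have hm2 : (m : ℝ) + 2 ≠ 0 := by positivity
  rw [f2, f1, pow_succ]
  field_simp
  ring

lemma key_identity (t : ℝ) :
    t * psum (dbK (dbK aaK)) t + 2 * psum (dbK aaK) t + psum aaK t = 0 := by
  have s0 : Summable fun m : ℕ => aaK m * t ^ m := psum_summable aaK_bound t
  have s1 : Summable fun m : ℕ => dbK aaK m * t ^ m := psum_summable db_aaK_bound t
  have s1' : Summable fun m : ℕ => (2 * dbK aaK m) * t ^ m :=
    (s1.mul_left 2).congr fun m => by ring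
  have s2mul : Summable fun m : ℕ => ((m : ℝ) * dbK aaK m) * t ^ m :=
    psum_summable (mulm_bound db_aaK_bound) t
  have step1 : t * psum (dbK (dbK aaK)) t = ∑' m : ℕ, ((m : ℝ) * dbK aaK m) * t ^ m := by
    rw [psum, ← tsum_mul_left, s2mul.tsum_eq_zero_add]
    simp only [Nat.cast_zero, zero_mul, zero_add]
    apply tsum_congr
    intro m
    simp only [dbK]
    push_cast
    ring
  have step2 : 2 * psum (dbK aaK) t = ∑' m : ℕ, (2 * dbK aaK m) * t ^ m := by
    rw [psum, ← tsum_mul_left]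
    apply tsum_congr; intro m; ring
  calc t * psum (dbK (dbK aaK)) t + 2 * psum (dbK aaK) t + psum aaK t
      = ∑' m : ℕ, (((m : ℝ) * dbK aaK m + 2 * dbK aaK m + aaK m) * t ^ m) := by
        rw [step1, step2, psum, ← Summable.tsum_add s2mul s1', ← Summable.tsum_add (s2mul.add s1') s0]
        apply tsum_congr; intro m
        ring
    _ = ∑' _ : ℕ, (0 : ℝ) := tsum_congr fun m => by rw [coef_identity m, zero_mul]
    _ = 0 := tsum_zero


lemma Lker_eq (c x y : ℝ) :
    Lker c x y = -(c / 2) * x * psum aaK (c * (x ^ 2 - y ^ 2) / 4) := by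
  rw [Lker, psum]
  congr 1
  apply tsum_congr
  intro m
  rw [aaK]
  ring

lemma hw_x (c y x : ℝ) :
    HasDerivAt (fun x' : ℝ => c * (x' ^ 2 - y ^ 2) / 4) (c * x / 2) x := by
  have h := (((hasDerivAt_pow 2 x).sub_const (y ^ 2)).const_mul c).div_const 4
  refine h.congr_deriv ?_
  push_cast
  ring

lemma hw_y (c x y : ℝ) :
    HasDerivAt (fun y' : ℝ => c * (x ^ 2 - y' ^ 2) / 4) (-(c * y / 2)) y := by
  have h := (((hasDerivAt_pow 2 y).const_sub (x ^ 2)).const_mul c).div_const 4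
  refine h.congr_deriv ?_
  push_cast
  ring

lemma hLx (c y x : ℝ) :
    HasDerivAt (fun x' => Lker c x' y)
      (-(c / 2) * psum aaK (c * (x ^ 2 - y ^ 2) / 4)
        - c ^ 2 / 4 * x ^ 2 * psum (dbK aaK) (c * (x ^ 2 - y ^ 2) / 4)) x := by
  have hfun : (fun x' => Lker c x' y)
      = fun x' => -(c / 2) * x' * psum aaK (c * (x' ^ 2 - y ^ 2) / 4) :=
    funext fun x' => Lker_eq c x' y
  rw [hfun]
  have hcomp : HasDerivAt (fun x' => psum aaK (c * (x' ^ 2 - y ^ 2) / 4))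
      (psum (dbK aaK) (c * (x ^ 2 - y ^ 2) / 4) * (c * x / 2)) x :=
    (psum_hasDerivAt aaK_bound _).comp x (hw_x c y x)
  have hmul := ((hasDerivAt_id x).const_mul (-(c / 2))).mul hcomp
  refine hmul.congr_deriv ?_
  simp only [id_eq]
  ring

lemma pdx_Lker (c x y : ℝ) :
    pdx (Lker c) x y = -(c / 2) * psum aaK (c * (x ^ 2 - y ^ 2) / 4)
      - c ^ 2 / 4 * x ^ 2 * psum (dbK aaK) (c * (x ^ 2 - y ^ 2) / 4) := by
  rw [pdx]
  exact (hLx c y x).deriv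

lemma pdxx_Lker (c x y : ℝ) :
    pdx (pdx (Lker c)) x y
      = -(3 * c ^ 2 / 4) * x * psum (dbK aaK) (c * (x ^ 2 - y ^ 2) / 4)
        - c ^ 3 / 8 * x ^ 3 * psum (dbK (dbK aaK)) (c * (x ^ 2 - y ^ 2) / 4) := by
  rw [pdx]
  have hfun : (fun x' => pdx (Lker c) x' y)
      = fun x' => -(c / 2) * psum aaK (c * (x' ^ 2 - y ^ 2) / 4)
        - c ^ 2 / 4 * x' ^ 2 * psum (dbK aaK) (c * (x' ^ 2 - y ^ 2) / 4) :=
    funext fun x' => pdx_Lker c x' y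
  rw [hfun]
  have hA : HasDerivAt (fun x' => psum aaK (c * (x' ^ 2 - y ^ 2) / 4))
      (psum (dbK aaK) (c * (x ^ 2 - y ^ 2) / 4) * (c * x / 2)) x :=
    (psum_hasDerivAt aaK_bound _).comp x (hw_x c y x)
  have hB : HasDerivAt (fun x' => psum (dbK aaK) (c * (x' ^ 2 - y ^ 2) / 4))
      (psum (dbK (dbK aaK)) (c * (x ^ 2 - y ^ 2) / 4) * (c * x / 2)) x :=
    (psum_hasDerivAt db_aaK_bound _).comp x (hw_x c y x)
  have h1 := hA.const_mul (-(c / 2))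
  have hx2 := (hasDerivAt_pow 2 x).const_mul (c ^ 2 / 4)
  have h2 := hx2.mul hB
  have htot := h1.sub h2
  refine HasDerivAt.deriv ?_
  refine htot.congr_deriv ?_
  push_cast
  ring

lemma hLy (c x y : ℝ) :
    HasDerivAt (fun y' => Lker c x y')
      (c ^ 2 / 4 * x * y * psum (dbK aaK) (c * (x ^ 2 - y ^ 2) / 4)) y := by
  have hfun : (fun y' => Lker c x y')
      = fun y' => -(c / 2) * x * psum aaK (c * (x ^ 2 - y' ^ 2) / 4) :=
    funext fun y' => Lker_eq c x y'
  rw [hfun]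
  have hcomp : HasDerivAt (fun y' => psum aaK (c * (x ^ 2 - y' ^ 2) / 4))
      (psum (dbK aaK) (c * (x ^ 2 - y ^ 2) / 4) * (-(c * y / 2))) y :=
    (psum_hasDerivAt aaK_bound _).comp y (hw_y c x y)
  have h := hcomp.const_mul (-(c / 2) * x)
  refine h.congr_deriv ?_
  ring

lemma pdy_Lker (c x y : ℝ) :
    pdy (Lker c) x y = c ^ 2 / 4 * x * y * psum (dbK aaK) (c * (x ^ 2 - y ^ 2) / 4) := by
  rw [pdy]
  exact (hLy c x y).deriv

lemma pdyy_Lker (c x y : ℝ) :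
    pdy (pdy (Lker c)) x y
      = c ^ 2 / 4 * x * psum (dbK aaK) (c * (x ^ 2 - y ^ 2) / 4)
        - c ^ 3 / 8 * x * y ^ 2 * psum (dbK (dbK aaK)) (c * (x ^ 2 - y ^ 2) / 4) := by
  rw [pdy]
  have hfun : (fun y' => pdy (Lker c) x y')
      = fun y' => c ^ 2 / 4 * x * y' * psum (dbK aaK) (c * (x ^ 2 - y' ^ 2) / 4) :=
    funext fun y' => pdy_Lker c x y'
  rw [hfun]
  have hB : HasDerivAt (fun y' => psum (dbK aaK) (c * (x ^ 2 - y' ^ 2) / 4))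
      (psum (dbK (dbK aaK)) (c * (x ^ 2 - y ^ 2) / 4) * (-(c * y / 2))) y :=
    (psum_hasDerivAt db_aaK_bound _).comp y (hw_y c x y)
  have h := (((hasDerivAt_id y).const_mul (c ^ 2 / 4 * x)).mul hB)
  refine HasDerivAt.deriv ?_
  refine h.congr_deriv ?_
  simp only [id_eq]
  ring

lemma psum_aaK_zero : psum aaK 0 = 1 := by
  rw [psum, tsum_eq_single 0]
  · simp [aaK]
  · intro m hm
    rw [zero_pow hm, mul_zero]

/-- the kernel `L_c` solves the inverse backstepping kernel equation
`ℓ_xx − ℓ_yy + c·ℓ = 0` with `ℓ_y(x,0) = 0` and `ℓ(x,x) = −cx/2`. -/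
theorem Lker_solves_inverse_kernel_equation (c : ℝ) (hc : c > 0) :
    (∀ x y : ℝ,
      pdx (pdx (Lker c)) x y - pdy (pdy (Lker c)) x y + c * Lker c x y = 0) ∧
    (∀ x : ℝ, pdy (Lker c) x 0 = 0) ∧
    (∀ x : ℝ, Lker c x x = -(c / 2) * x) := by
  refine ⟨?_, ?_, ?_⟩
  · intro x y
    rw [pdxx_Lker c x y, pdyy_Lker c x y, Lker_eq c x y]
    have hk := key_identity (c * (x ^ 2 - y ^ 2) / 4)
    linear_combination (-(c ^ 2 / 2) * x) * hk
  · intro x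
    rw [pdy_Lker c x 0]
    ring
  · intro x
    have h0 : c * (x ^ 2 - x ^ 2) / 4 = 0 := by ring
    rw [Lker_eq c x x, h0, psum_aaK_zero, mul_one]
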